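/- Let G be a 3-connected locally nonforesty graph whose degree sequence consists of 2k vertices of degree 3 and the remaining vertices of degree 4, where the degree-3 vertices are a_1, ..., a_{2k} and form an independent set, with n = |V(G)| ≥ 8. Then the closed neighborhoods A_i = N[a_i] are pairwise disjoint, and each induces K_4. -/

import Mathlib

open SimpleGraph

def LocallyNonforesty {V : Type*} (G : SimpleGraph V) : Prop :=
  ∀ v : V, ¬ (G.induce (G.neighborSet v)).IsAcyclic

def ThreeConnected {V : Type*} [Fintype V] (G : SimpleGraph V) : Prop :=
  4 ≤ Fintype.card V ∧ ∀ S : Finset V, S.card ≤ 2 → (G.induce ((↑S : Set V)ᶜ)).Connected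

lemma cycle_card3 {W : Type*} [Fintype W] (H : SimpleGraph W) (hcard : Fintype.card W = 3)
    (h : ¬ H.IsAcyclic) : ∀ x y : W, x ≠ y → H.Adj x y := by
  classical
  simp only [SimpleGraph.IsAcyclic, not_forall, not_not] at h
  obtain ⟨v, c, hc⟩ := h
  have h3 : 3 ≤ c.length := hc.three_le_length
  have hle : c.length ≤ 3 := by
    have hn : c.support.tail.Nodup := hc.2
    have := hn.length_le_card
    have hlen : c.support.length = c.length + 1 := c.length_support
    simp [hcard] at this
    omega
  cases c with
  | nil => simp at h3
  | cons h1 p =>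
    cases p with
    | nil => simp at h3
    | cons h2 q =>
      cases q with
      | nil => simp at h3
      | cons h3' r =>
        cases r with
        | cons h4 s => simp [Walk.length_cons] at hle; omega
        | nil =>
          rename_i w u
          have hnd := hc.2
          simp [Walk.support_cons] at hnd
          obtain ⟨⟨hwu, hwv⟩, huv⟩ := hnd
          have huniv : ∀ x : W, x = v ∨ x = w ∨ x = u := by
            intro x
            have hU : ({v, w, u} : Finset W) = Finset.univ := by
              apply Finset.eq_univ_of_card
              rw [hcard, Finset.card_insert_of_notMem (by simp [Ne.symm hwv, Ne.symm huv]),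
                Finset.card_insert_of_notMem (by simp [hwu]), Finset.card_singleton]
            have := hU ▸ Finset.mem_univ x
            simpa using this
          intro x y hxy
          rcases huniv x with rfl|rfl|rfl <;> rcases huniv y with rfl|rfl|rfl <;>
            first
              | exact absurd rfl hxy
              | exact h1 | exact h1.symm | exact h2 | exact h2.symm
              | exact h3' | exact h3'.symm

theorem stmt10 {V : Type*} [Fintype V] (G : SimpleGraph V) [DecidableRel G.Adj]
    (k : ℕ) (h3 : ThreeConnected G) (hl : LocallyNonforesty G)
    (hn : 8 ≤ Fintype.card V)
    (hdeg : ∀ v : V, G.degree v = 3 ∨ G.degree v = 4)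
    (hs : (Finset.univ.filter (fun v => G.degree v = 3)).card = 2 * k)
    (hind : ∀ a b : V, G.degree a = 3 → G.degree b = 3 → ¬ G.Adj a b) :
    (∀ a b : V, G.degree a = 3 → G.degree b = 3 → a ≠ b →
      Disjoint (insert a (G.neighborSet a)) (insert b (G.neighborSet b))) ∧
    (∀ a : V, G.degree a = 3 → G.IsClique (insert a (G.neighborSet a))) := by
  classical
  have tri : ∀ a x y : V, G.degree a = 3 → G.Adj a x → G.Adj a y → x ≠ y → G.Adj x y := by
    intro a x y ha hx hy hxy
    have hcard : Fintype.card (G.neighborSet a) = 3 := by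
      rw [G.card_neighborSet_eq_degree, ha]
    have h := cycle_card3 (G.induce (G.neighborSet a)) hcard (hl a)
      ⟨x, hx⟩ ⟨y, hy⟩ (by simp [Subtype.ext_iff]; exact hxy)
    exact h
  have clique : ∀ a : V, G.degree a = 3 → G.IsClique (insert a (G.neighborSet a)) := by
    intro a ha x hx y hy hxy
    simp only [Set.mem_insert_iff, mem_neighborSet] at hx hy
    rcases hx with rfl | hx
    · rcases hy with rfl | hy
      · exact absurd rfl hxy
      · exact hy
    · rcases hy with rfl | hy
      · exact hx.symm
      · exact tri a x y ha hx hy hxy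
  refine ⟨?_, clique⟩
  intro a b ha hb hab
  rw [Set.disjoint_left]
  intro x hxA hxB
  simp only [Set.mem_insert_iff, mem_neighborSet] at hxA hxB
  rcases hxA with rfl | hxa
  · rcases hxB with rfl | hxb
    · exact hab rfl
    · exact hind b x hb ha hxb
  rcases hxB with rfl | hxb
  · exact hind a x ha hb hxa
  -- basic facts
  have haNa : a ∉ G.neighborFinset a := by simp
  have hbNb : b ∉ G.neighborFinset b := by simp
  have hbNa : b ∉ G.neighborFinset a := by
    simp only [mem_neighborFinset]; exact hind a b ha hb
  have haNb : a ∉ G.neighborFinset b := by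
    simp only [mem_neighborFinset]; exact hind b a hb ha
  have hcNa : (G.neighborFinset a).card = 3 := by
    rw [G.card_neighborFinset_eq_degree, ha]
  have hcNb : (G.neighborFinset b).card = 3 := by
    rw [G.card_neighborFinset_eq_degree, hb]
  have hxNa : x ∈ G.neighborFinset a := by rwa [mem_neighborFinset]
  have hxNb : x ∈ G.neighborFinset b := by rwa [mem_neighborFinset]
  have hdle : ∀ v : V, G.degree v ≤ 4 := by
    intro v; rcases hdeg v with h | h <;> omega
  -- Step 1 : N(a) = N(b)
  have hNab : G.neighborFinset a = G.neighborFinset b := by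
    have hsub : ({a, b} : Finset V) ∪ ((G.neighborFinset a).erase x ∪ (G.neighborFinset b).erase x)
        ⊆ G.neighborFinset x := by
      intro z hz
      rw [mem_neighborFinset]
      simp only [Finset.mem_union, Finset.mem_insert, Finset.mem_singleton,
        Finset.mem_erase, mem_neighborFinset] at hz
      rcases hz with (rfl | rfl) | ⟨hzx, hz⟩ | ⟨hzx, hz⟩
      · exact hxa.symm
      · exact hxb.symm
      · exact tri a x z ha hxa hz (fun h => hzx h.symm)
      · exact tri b x z hb hxb hz (fun h => hzx h.symm)
    have hdisj : Disjoint ({a, b} : Finset V)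
        ((G.neighborFinset a).erase x ∪ (G.neighborFinset b).erase x) := by
      simp only [Finset.disjoint_left, Finset.mem_insert, Finset.mem_singleton,
        Finset.mem_union, Finset.mem_erase]
      rintro z (rfl | rfl)
      · rintro (⟨-, h⟩ | ⟨-, h⟩)
        · exact haNa h
        · exact haNb h
      · rintro (⟨-, h⟩ | ⟨-, h⟩)
        · exact hbNa h
        · exact hbNb h
    have hcu : (({a, b} : Finset V) ∪
        ((G.neighborFinset a).erase x ∪ (G.neighborFinset b).erase x)).card
        = 2 + ((G.neighborFinset a).erase x ∪ (G.neighborFinset b).erase x).card := by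
      rw [Finset.card_union_of_disjoint hdisj, Finset.card_insert_of_notMem (by simp [hab]),
        Finset.card_singleton]
    have hle4 : (({a, b} : Finset V) ∪
        ((G.neighborFinset a).erase x ∪ (G.neighborFinset b).erase x)).card ≤ 4 := by
      calc _ ≤ (G.neighborFinset x).card := Finset.card_le_card hsub
        _ = G.degree x := G.card_neighborFinset_eq_degree x
        _ ≤ 4 := hdle x
    have hcea : ((G.neighborFinset a).erase x).card = 2 := by
      rw [Finset.card_erase_of_mem hxNa, hcNa]
    have hceb : ((G.neighborFinset b).erase x).card = 2 := by
      rw [Finset.card_erase_of_mem hxNb, hcNb]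
    have hule : ((G.neighborFinset a).erase x ∪ (G.neighborFinset b).erase x).card ≤ 2 := by
      omega
    have h1 : (G.neighborFinset a).erase x
        = (G.neighborFinset a).erase x ∪ (G.neighborFinset b).erase x :=
      Finset.eq_of_subset_of_card_le Finset.subset_union_left (by omega)
    have h2 : (G.neighborFinset b).erase x
        = (G.neighborFinset a).erase x ∪ (G.neighborFinset b).erase x :=
      Finset.eq_of_subset_of_card_le Finset.subset_union_right (by omega)
    have he : (G.neighborFinset a).erase x = (G.neighborFinset b).erase x := by rw [h1, ← h2]
    have := congrArg (insert x) he
    rwa [Finset.insert_erase hxNa, Finset.insert_erase hxNb] at this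
  -- Step 2 : the closed set S
  set S : Finset V := insert a (insert b (G.neighborFinset a)) with hS
  have hSclosed : ∀ s ∈ S, ∀ t : V, G.Adj s t → t ∈ S := by
    intro s hs t hst
    simp only [hS, Finset.mem_insert] at hs ⊢
    rcases hs with rfl | rfl | hs
    · right; right; rwa [mem_neighborFinset]
    · right; right; rw [hNab, mem_neighborFinset]; exact hst
    · -- s is a common neighbor; its whole neighborhood is {a,b} ∪ N(a) \ {s}
      have hsNb : s ∈ G.neighborFinset b := by rwa [← hNab]
      have hsa : G.Adj a s := by rwa [mem_neighborFinset] at hs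
      have hsb : G.Adj b s := by rwa [mem_neighborFinset] at hsNb
      have hsub : ({a, b} : Finset V) ∪ (G.neighborFinset a).erase s
          ⊆ G.neighborFinset s := by
        intro z hz
        rw [mem_neighborFinset]
        simp only [Finset.mem_union, Finset.mem_insert, Finset.mem_singleton,
          Finset.mem_erase, mem_neighborFinset] at hz
        rcases hz with (rfl | rfl) | ⟨hzs, hz⟩
        · exact hsa.symm
        · exact hsb.symm
        · exact tri a s z ha hsa hz (fun h => hzs h.symm)
      have hdisj : Disjoint ({a, b} : Finset V) ((G.neighborFinset a).erase s) := by
        simp only [Finset.disjoint_left, Finset.mem_insert, Finset.mem_singleton,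
          Finset.mem_erase]
        rintro z (rfl | rfl)
        · rintro ⟨-, h⟩; exact haNa h
        · rintro ⟨-, h⟩; exact hbNa h
      have hcT : (({a, b} : Finset V) ∪ (G.neighborFinset a).erase s).card = 4 := by
        rw [Finset.card_union_of_disjoint hdisj, Finset.card_insert_of_notMem (by simp [hab]),
          Finset.card_singleton, Finset.card_erase_of_mem hs, hcNa]
      have heq : ({a, b} : Finset V) ∪ (G.neighborFinset a).erase s = G.neighborFinset s := by
        apply Finset.eq_of_subset_of_card_le hsub
        rw [hcT, G.card_neighborFinset_eq_degree]
        exact hdle s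
      have ht : t ∈ ({a, b} : Finset V) ∪ (G.neighborFinset a).erase s := by
        rw [heq, mem_neighborFinset]; exact hst
      simp only [Finset.mem_union, Finset.mem_insert, Finset.mem_singleton,
        Finset.mem_erase] at ht
      rcases ht with (rfl | rfl) | ⟨-, h⟩
      · left; rfl
      · right; left; rfl
      · right; right; exact h
  have hcS : S.card = 5 := by
    rw [hS, Finset.card_insert_of_notMem (by simp [hab, haNa]),
      Finset.card_insert_of_notMem hbNa, hcNa]
  obtain ⟨z, hz⟩ : ∃ z : V, z ∉ S := by
    by_contra h
    push_neg at h
    have : (Finset.univ : Finset V) ⊆ S := fun z _ => h z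
    have := Finset.card_le_card this
    rw [Finset.card_univ, hcS] at this
    omega
  have hconn := (h3.2 ∅ (by simp)).preconnected
  have hmem : ∀ v : V, v ∈ ((↑(∅ : Finset V) : Set V)ᶜ) := by simp
  obtain ⟨p⟩ := hconn ⟨a, hmem a⟩ ⟨z, hmem z⟩
  have key : ∀ (u w : ↥((↑(∅ : Finset V) : Set V)ᶜ))
      (p : (G.induce ((↑(∅ : Finset V) : Set V)ᶜ)).Walk u w), (u : V) ∈ S → (w : V) ∈ S := by
    intro u w p
    induction p with
    | nil => exact id
    | cons h p ih => exact fun hu => ih (hSclosed _ hu _ h)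
  exact hz (key _ _ p (by simp [hS]))
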